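/- Let A be a finite dimensional hereditary algebra over an algebraically closed field K, given as the path algebra of a finite connected acyclic quiver with n vertices. If X = {X_1,...,X_t} is a stratifying system over A (i.e., each X_i is indecomposable, Hom_A(X_j, X_i) = 0 for j > i, and Ext^1_A(X_j, X_i) = 0 for j ≥ i), then t ≤ n. -/

import Mathlib

open CategoryTheory CategoryTheory.Limits

noncomputable section

/-- `Hom_A(M,N) = 0`. -/
def HomZero (R : Type) [Ring R] (M N : ModuleCat R) : Prop := ∀ f : M ⟶ N, f = 0

/-- `Ext¹_A(M,N) = 0`, expressed by: every short exact sequence `0 → N → E → M → 0`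
in `mod A` splits. -/
def Ext1Zero (R : Type) [Ring R] (M N : ModuleCat R) : Prop :=
  ∀ (S : CategoryTheory.ShortComplex (ModuleCat R)), S.ShortExact →
    (S.X₁ ≅ N) → (S.X₃ ≅ M) → Nonempty S.Splitting

/-- An indecomposable module: nonzero, and any direct sum decomposition is trivial. -/
def Indec (R : Type) [Ring R] (M : ModuleCat R) : Prop :=
  ¬ IsZero M ∧ ∀ N P : ModuleCat R, Nonempty (M ≅ N ⊞ P) → IsZero N ∨ IsZero P

/-- A stratifying system of size `t`: a sequence `X₁, …, X_t` of indecomposable modules with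
`Hom(X_j, X_i) = 0` for `j > i` and `Ext¹(X_j, X_i) = 0` for `j ≥ i`. -/
def IsStratSys (R : Type) [Ring R] {t : ℕ} (X : Fin t → ModuleCat R) : Prop :=
  (∀ i, Indec R (X i)) ∧
  (∀ i j : Fin t, i < j → HomZero R (X j) (X i)) ∧
  (∀ i j : Fin t, i ≤ j → Ext1Zero R (X j) (X i))

/-- `R` is a hereditary ring: every submodule of a projective module is projective. -/
def Hereditary (R : Type) [Ring R] : Prop :=
  ∀ (P : ModuleCat.{0} R), Projective P → ∀ N : Submodule R P, Projective (ModuleCat.of R N)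

/-- `S` is a complete list of `n` pairwise non-isomorphic simple `R`-modules; the number `n`
is then the rank of the Grothendieck group `K₀(R)`. -/
def IsCompleteSimpleList (R : Type) [Ring R] {n : ℕ} (S : Fin n → ModuleCat R) : Prop :=
  (∀ i, IsSimpleModule R (S i)) ∧
  (∀ i j : Fin n, i ≠ j → IsEmpty (S i ≅ S j)) ∧
  (∀ M : ModuleCat R, IsSimpleModule R M → ∃ i, Nonempty (M ≅ S i))


namespace StratProof

universe u u' v w

open Module LinearMap

variable {K A : Type} [Field K] [Ring A] [Algebra K A]

/-- Central scalar multiplication by `algebraMap K A k` as an `A`-linear endomorphism. -/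
def cmul (K : Type) {A : Type} [Field K] [Ring A] [Algebra K A]
    (P : Type u) [AddCommGroup P] [Module A P] (k : K) : P →ₗ[A] P where
  toFun x := algebraMap K A k • x
  map_add' x y := smul_add _ x y
  map_smul' a x := by
    simp only [RingHom.id_apply, smul_smul]
    rw [Algebra.commutes]

/-- The `K`-module structure on `A`-linear maps, via central multiplication on the source. -/
instance homModule (P : Type u) [AddCommGroup P] [Module A P]
    (N : Type v) [AddCommGroup N] [Module A N] : Module K (P →ₗ[A] N) where
  smul k f := f.comp (cmul K P k)
  one_smul f := by ext x; show f (algebraMap K A 1 • x) = f x; simp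
  mul_smul k₁ k₂ f := by
    ext x
    show f (algebraMap K A (k₁ * k₂) • x) = f (algebraMap K A k₂ • algebraMap K A k₁ • x)
    rw [smul_smul, ← map_mul, mul_comm k₂ k₁]
  smul_zero k := by ext x; show (0 : P →ₗ[A] N) (algebraMap K A k • x) = 0; simp
  smul_add k f g := by
    ext x
    show (f + g) (algebraMap K A k • x) = f (algebraMap K A k • x) + g (algebraMap K A k • x)
    simp
  add_smul k₁ k₂ f := by
    ext x
    show f (algebraMap K A (k₁ + k₂) • x)
      = f (algebraMap K A k₁ • x) + f (algebraMap K A k₂ • x)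
    rw [map_add, add_smul, map_add]
  zero_smul f := by ext x; show f (algebraMap K A 0 • x) = 0; simp

lemma smul_hom_def (k : K) {P : Type u} [AddCommGroup P] [Module A P]
    {N : Type v} [AddCommGroup N] [Module A N] (f : P →ₗ[A] N) (x : P) :
    (k • f) x = f (algebraMap K A k • x) := rfl

/-- Post-composition as a `K`-linear map. -/
def postcomp (K : Type) {A : Type} [Field K] [Ring A] [Algebra K A]
    (P : Type u) [AddCommGroup P] [Module A P]
    {N : Type v} {N' : Type w} [AddCommGroup N] [Module A N] [AddCommGroup N'] [Module A N']
    (β : N →ₗ[A] N') : (P →ₗ[A] N) →ₗ[K] (P →ₗ[A] N') where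
  toFun g := β.comp g
  map_add' g₁ g₂ := by ext x; simp
  map_smul' k g := rfl

/-- Pre-composition as a `K`-linear map. -/
def precomp (K : Type) {A : Type} [Field K] [Ring A] [Algebra K A]
    {P : Type u} {P' : Type u'} [AddCommGroup P] [Module A P] [AddCommGroup P'] [Module A P']
    (N : Type v) [AddCommGroup N] [Module A N]
    (ι : P' →ₗ[A] P) : (P →ₗ[A] N) →ₗ[K] (P' →ₗ[A] N) where
  toFun g := g.comp ι
  map_add' g₁ g₂ := by ext x; simp
  map_smul' k g := by
    ext x
    simp only [RingHom.id_apply, LinearMap.comp_apply, smul_hom_def, map_smul]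

/-- `K`-linear congruence of hom spaces along an `A`-linear equivalence of targets. -/
def homCongr (K : Type) {A : Type} [Field K] [Ring A] [Algebra K A]
    (P : Type u) [AddCommGroup P] [Module A P]
    {N : Type v} {N' : Type w} [AddCommGroup N] [Module A N] [AddCommGroup N'] [Module A N']
    (e : N ≃ₗ[A] N') : (P →ₗ[A] N) ≃ₗ[K] (P →ₗ[A] N') where
  toFun g := e.toLinearMap.comp g
  invFun g := e.symm.toLinearMap.comp g
  left_inv g := by ext x; simp
  right_inv g := by ext x; simp
  map_add' g₁ g₂ := by ext x; simp
  map_smul' k g := rfl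

/-- The canonical `K`-module structure on an `A`-module. -/
def kmod (K A : Type) [Field K] [Ring A] [Algebra K A]
    (N : Type v) [AddCommGroup N] [Module A N] : Module K N where
  smul k x := algebraMap K A k • x
  one_smul x := by show algebraMap K A 1 • x = x; simp
  mul_smul k₁ k₂ x := by
    show algebraMap K A (k₁ * k₂) • x = algebraMap K A k₁ • algebraMap K A k₂ • x
    rw [map_mul, mul_smul]
  smul_zero k := smul_zero _
  smul_add k x y := smul_add _ x y
  add_smul k₁ k₂ x := by
    show algebraMap K A (k₁ + k₂) • x = algebraMap K A k₁ • x + algebraMap K A k₂ • x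
    rw [map_add, add_smul]
  zero_smul x := by show algebraMap K A 0 • x = 0; simp

lemma findim_hom (P : Type u) [AddCommGroup P] [Module A P] [Module.Finite A P]
    (N : Type v) [AddCommGroup N] [Module A N] [Module.Finite A N] [FiniteDimensional K A] :
    FiniteDimensional K (P →ₗ[A] N) := by
  obtain ⟨m, s, hs⟩ := Module.Finite.exists_fin (R := A) (M := P)
  letI : Module K N := kmod K A N
  haveI : IsScalarTower K A N := ⟨fun k a x => by rw [Algebra.smul_def, mul_smul]; rfl⟩
  haveI : Module.Finite K N := Module.Finite.trans A N
  let ev : (P →ₗ[A] N) →ₗ[K] (Fin m → N) :=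
    { toFun := fun f i => f (s i)
      map_add' := fun f g => rfl
      map_smul' := fun k f => by
        funext i
        show f (algebraMap K A k • s i) = algebraMap K A k • f (s i)
        rw [map_smul] }
  have hinj : Function.Injective ev := by
    intro f g hfg
    have h0 : ∀ i, f (s i) = g (s i) := fun i => congrFun hfg i
    ext x
    have hx : x ∈ (⊤ : Submodule A P) := trivial
    rw [← hs] at hx
    induction hx using Submodule.span_induction with
    | mem z hz => obtain ⟨i, rfl⟩ := hz; exact h0 i
    | zero => simp
    | add a b _ _ ha hb => simp [ha, hb]
    | smul a x _ hx => simp [hx]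
  exact FiniteDimensional.of_injective ev hinj

lemma finrank_add_of_exact {V₁ : Type u} {V₂ : Type v} {V₃ : Type w}
    [AddCommGroup V₁] [Module K V₁] [AddCommGroup V₂] [Module K V₂]
    [AddCommGroup V₃] [Module K V₃] [FiniteDimensional K V₂]
    (α : V₁ →ₗ[K] V₂) (β : V₂ →ₗ[K] V₃) (hα : Function.Injective α)
    (hβ : Function.Surjective β) (h : LinearMap.ker β = LinearMap.range α) :
    finrank K V₂ = finrank K V₁ + finrank K V₃ := by
  have h1 := β.finrank_range_add_finrank_ker
  rw [h, LinearMap.range_eq_top.mpr hβ, finrank_top] at h1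
  have h2 : finrank K (LinearMap.range α) = finrank K V₁ :=
    (LinearEquiv.ofInjective α hα).finrank_eq.symm
  omega

lemma hom_finrank_add {P : Type u} [AddCommGroup P] [Module A P] [Module.Finite A P]
    (hP : Module.Projective A P)
    {N₁ N₂ N₃ : Type v} [AddCommGroup N₁] [Module A N₁] [AddCommGroup N₂] [Module A N₂]
    [Module.Finite A N₂] [AddCommGroup N₃] [Module A N₃] [FiniteDimensional K A]
    (α : N₁ →ₗ[A] N₂) (β : N₂ →ₗ[A] N₃) (hα : Function.Injective α)
    (hβ : Function.Surjective β) (hk : LinearMap.ker β = LinearMap.range α) :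
    finrank K (P →ₗ[A] N₂) = finrank K (P →ₗ[A] N₁) + finrank K (P →ₗ[A] N₃) := by
  haveI := findim_hom (K := K) (A := A) P N₂
  haveI := hP
  have hβα : β.comp α = 0 := by
    ext y
    have : α y ∈ LinearMap.ker β := by rw [hk]; exact ⟨y, rfl⟩
    simpa using this
  refine finrank_add_of_exact (V₁ := P →ₗ[A] N₁) (V₂ := P →ₗ[A] N₂) (V₃ := P →ₗ[A] N₃)
    (postcomp K P α) (postcomp K P β) ?_ ?_ ?_
  · intro g₁ g₂ hg
    ext x
    exact hα (congrFun (congrArg (fun (f : P →ₗ[A] N₂) => (f : P → N₂)) hg) x)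
  · intro g
    obtain ⟨hℓ, hh⟩ := Module.projective_lifting_property β g hβ
    exact ⟨hℓ, hh⟩
  · ext g
    simp only [LinearMap.mem_ker, LinearMap.mem_range]
    constructor
    · intro hg
      have hmem : ∀ x, g x ∈ LinearMap.range α := by
        intro x
        rw [← hk]
        show β (g x) = 0
        exact congrFun (congrArg (fun (f : P →ₗ[A] N₃) => (f : P → N₃)) hg) x
      let e := LinearEquiv.ofInjective α hα
      let g' : P →ₗ[A] (LinearMap.range α) := g.codRestrict _ hmem
      refine ⟨e.symm.toLinearMap.comp g', ?_⟩
      ext x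
      show α (e.symm (g' x)) = g x
      have : ∀ z : LinearMap.range α, α (e.symm z) = (z : N₂) := by
        intro z
        conv_rhs => rw [← e.apply_symm_apply z]
        rw [LinearEquiv.ofInjective_apply]
      rw [this]
      rfl
    · rintro ⟨h, rfl⟩
      show β.comp (α.comp h) = 0
      rw [← LinearMap.comp_assoc, hβα, LinearMap.zero_comp]

lemma precomp_surjective {P₀ P₁ : Type} [AddCommGroup P₀] [Module A P₀]
    [AddCommGroup P₁] [Module A P₁]
    (M N : ModuleCat.{v} A)
    (ι : P₁ →ₗ[A] P₀) (π : P₀ →ₗ[A] M) (hι : Function.Injective ι)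
    (hπ : Function.Surjective π) (hk : LinearMap.ker π = LinearMap.range ι)
    (hext : Ext1Zero A M N) (f : P₁ →ₗ[A] N) :
    ∃ g : P₀ →ₗ[A] N, g.comp ι = f := by
  classical
  set h : P₁ →ₗ[A] (Prod (N : Type v) P₀) := LinearMap.prod f (-ι) with hh
  set Q : Submodule A (Prod (N : Type v) P₀) := LinearMap.range h with hQ
  have hπι : ∀ y, π (ι y) = 0 := by
    intro y
    have : ι y ∈ LinearMap.ker π := by rw [hk]; exact ⟨y, rfl⟩
    simpa using this
  have hQle : Q ≤ LinearMap.ker (π.comp (LinearMap.snd A (N : Type v) P₀)) := by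
    rintro z ⟨y, rfl⟩
    show π ((h y).2) = 0
    have : (h y).2 = -ι y := rfl
    rw [this, map_neg, hπι, neg_zero]
  set e₁ : (N : Type v) →ₗ[A] (Prod (N : Type v) P₀) ⧸ Q :=
    Q.mkQ.comp (LinearMap.inl A (N : Type v) P₀) with he₁
  set e₂ : ((Prod (N : Type v) P₀) ⧸ Q) →ₗ[A] M :=
    Q.liftQ (π.comp (LinearMap.snd A (N : Type v) P₀)) hQle with he₂
  have he₂mk : ∀ z : Prod (N : Type v) P₀, e₂ (Submodule.Quotient.mk z) = π z.2 := by
    intro z; rfl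
  have he₁' : ∀ x : (N : Type v), e₁ x = Submodule.Quotient.mk (x, (0 : P₀)) := fun x => rfl
  have hzero : e₂.comp e₁ = 0 := by
    ext x
    show e₂ (e₁ x) = 0
    rw [he₁', he₂mk, map_zero]
  let SC : ShortComplex (ModuleCat.{v} A) :=
    ShortComplex.mk (ModuleCat.ofHom e₁ : N ⟶ ModuleCat.of A ((Prod (N : Type v) P₀) ⧸ Q))
      (ModuleCat.ofHom e₂ : ModuleCat.of A ((Prod (N : Type v) P₀) ⧸ Q) ⟶ M)
      (by
        ext x
        show e₂ (e₁ x) = 0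
        rw [he₁', he₂mk, map_zero])
  have hmono : Mono SC.f := by
    rw [ModuleCat.mono_iff_injective]
    have : LinearMap.ker e₁ = ⊥ := by
      rw [LinearMap.ker_eq_bot']
      intro x hx
      have hmem : ((x, (0 : P₀)) : Prod (N : Type v) P₀) ∈ Q := by
        rw [← Submodule.Quotient.mk_eq_zero, ← he₁']
        exact hx
      obtain ⟨y, hy⟩ := hmem
      have h2 : -ι y = 0 := congrArg Prod.snd hy
      have hy0 : y = 0 := hι (by simpa using h2)
      have h1 : f y = x := congrArg Prod.fst hy
      rw [← h1, hy0, map_zero]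
    exact LinearMap.ker_eq_bot.mp this
  have hepi : Epi SC.g := by
    rw [ModuleCat.epi_iff_surjective]
    intro m
    obtain ⟨p, hp⟩ := hπ m
    exact ⟨Submodule.Quotient.mk ((0 : (N : Type v)), p), hp⟩
  have hexac : SC.Exact := by
    rw [ShortComplex.moduleCat_exact_iff]
    intro x hx
    obtain ⟨⟨nn, pp⟩, rfl⟩ := Submodule.Quotient.mk_surjective Q x
    have hpp : π pp = 0 := by
      have := hx
      rw [show SC.g = ModuleCat.ofHom e₂ from rfl] at this
      simpa [he₂mk] using this
    have : pp ∈ LinearMap.range ι := by rw [← hk]; exact hpp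
    obtain ⟨y, hy⟩ := this
    refine ⟨nn + f y, ?_⟩
    show e₁ (nn + f y) = Submodule.Quotient.mk (nn, pp)
    rw [he₁', Submodule.Quotient.eq]
    refine ⟨y, ?_⟩
    show (f y, -ι y) = (nn + f y, (0:P₀)) - (nn, pp)
    rw [hy]
    ext <;> simp
  have hSE : SC.ShortExact := ShortComplex.ShortExact.mk' hexac hmono hepi
  obtain ⟨sp⟩ := hext SC hSE (Iso.refl _) (Iso.refl _)
  set r : ((Prod (N : Type v) P₀) ⧸ Q) →ₗ[A] (N : Type v) := sp.r.hom with hr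
  have hre₁ : ∀ x : (N : Type v), r (e₁ x) = x := by
    intro x
    exact congrArg (fun g => ModuleCat.Hom.hom g x) sp.f_r
  refine ⟨r.comp (Q.mkQ.comp (LinearMap.inr A (N : Type v) P₀)), ?_⟩
  ext x
  show r (Submodule.Quotient.mk ((0 : (N : Type v)), ι x)) = f x
  have : (Submodule.Quotient.mk ((0 : (N : Type v)), ι x) : (Prod (N : Type v) P₀) ⧸ Q)
      = Submodule.Quotient.mk (f x, (0 : P₀)) := by
    rw [Submodule.Quotient.eq]
    exact ⟨-x, by rw [hh]; ext <;> simp⟩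
  rw [this, ← he₁' (f x), hre₁]

lemma hom_finrank_resolution {P₀ P₁ : Type} [AddCommGroup P₀] [Module A P₀] [Module.Finite A P₀]
    [AddCommGroup P₁] [Module A P₁]
    (M N : ModuleCat.{v} A) [Module.Finite A M] [Module.Finite A N] [FiniteDimensional K A]
    (ι : P₁ →ₗ[A] P₀) (π : P₀ →ₗ[A] M) (hι : Function.Injective ι)
    (hπ : Function.Surjective π) (hk : LinearMap.ker π = LinearMap.range ι)
    (hext : Ext1Zero A M N) :
    finrank K (P₀ →ₗ[A] (N : Type v)) =
      finrank K ((M : Type v) →ₗ[A] (N : Type v)) + finrank K (P₁ →ₗ[A] (N : Type v)) := by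
  haveI := findim_hom (K := K) (A := A) P₀ (N : Type v)
  have hπι : π.comp ι = 0 := by
    ext y
    have : ι y ∈ LinearMap.ker π := by rw [hk]; exact ⟨y, rfl⟩
    simpa using this
  refine finrank_add_of_exact (V₁ := (M : Type v) →ₗ[A] (N : Type v))
    (V₂ := P₀ →ₗ[A] (N : Type v)) (V₃ := P₁ →ₗ[A] (N : Type v))
    (precomp K (N : Type v) π) (precomp K (N : Type v) ι) ?_ ?_ ?_
  · intro g₁ g₂ hg
    ext m
    obtain ⟨x, rfl⟩ := hπ m
    exact congrFun (congrArg (fun (u : P₀ →ₗ[A] (N : Type v)) => (u : P₀ → (N : Type v))) hg) x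
  · intro g
    exact precomp_surjective M N ι π hι hπ hk hext g
  · ext g
    simp only [LinearMap.mem_ker, LinearMap.mem_range]
    constructor
    · intro hg
      have hle : LinearMap.ker π ≤ LinearMap.ker g := by
        intro x hx
        rw [hk] at hx
        obtain ⟨y, rfl⟩ := hx
        show g (ι y) = 0
        exact congrFun (congrArg (fun (u : P₁ →ₗ[A] (N : Type v)) => (u : P₁ → (N : Type v))) hg) y
      set e := LinearMap.quotKerEquivOfSurjective π hπ with he
      refine ⟨((LinearMap.ker π).liftQ g hle).comp e.symm.toLinearMap, ?_⟩
      ext x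
      show ((LinearMap.ker π).liftQ g hle) (e.symm (π x)) = g x
      have hmk : e (Submodule.Quotient.mk x) = π x := by
        rw [he]
        simp [LinearMap.quotKerEquivOfSurjective, LinearMap.quotKerEquivRange_apply_mk]
      rw [← hmk, LinearEquiv.symm_apply_apply]
      rfl
    · rintro ⟨u, rfl⟩
      show (u.comp π).comp ι = 0
      rw [LinearMap.comp_assoc, hπι, LinearMap.comp_zero]

lemma noeth_and_art [FiniteDimensional K A] (N : Type v) [AddCommGroup N] [Module A N]
    [Module.Finite A N] : IsNoetherian A N ∧ IsArtinian A N := by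
  letI : Module K N := kmod K A N
  haveI : IsScalarTower K A N := ⟨fun k a x => by rw [Algebra.smul_def, mul_smul]; rfl⟩
  haveI : Module.Finite K N := Module.Finite.trans A N
  haveI hn : IsNoetherian K N := isNoetherian_of_isNoetherianRing_of_finite K N
  haveI ha : IsArtinian K N := isArtinian_of_fg_of_artinian'
  exact ⟨isNoetherian_of_tower K hn, isArtinian_of_tower K ha⟩

lemma sum_vanish [FiniteDimensional K A] {t : ℕ} (c : Fin t → ℚ)
    (P₀ P₁ : Fin t → Type) [∀ j, AddCommGroup (P₀ j)] [∀ j, Module A (P₀ j)]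
    [∀ j, Module.Finite A (P₀ j)]
    [∀ j, AddCommGroup (P₁ j)] [∀ j, Module A (P₁ j)] [∀ j, Module.Finite A (P₁ j)]
    (hp₀ : ∀ j, Module.Projective A (P₀ j)) (hp₁ : ∀ j, Module.Projective A (P₁ j))
    (hsimple : ∀ (V : Type v) [AddCommGroup V] [Module A V], IsSimpleModule A V →
      ∑ j, c j * ((finrank K (P₀ j →ₗ[A] V) : ℚ) - (finrank K (P₁ j →ₗ[A] V) : ℚ)) = 0)
    (N : Type v) [AddCommGroup N] [Module A N] [Module.Finite A N] :
    ∑ j, c j * ((finrank K (P₀ j →ₗ[A] N) : ℚ) - (finrank K (P₁ j →ₗ[A] N) : ℚ)) = 0 := by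
  obtain ⟨hnoeth, hart⟩ := noeth_and_art (K := K) (A := A) N
  haveI := hnoeth
  haveI := hart
  suffices H : ∀ W : Submodule A N,
      ∑ j, c j * ((finrank K (P₀ j →ₗ[A] (N ⧸ W)) : ℚ)
        - (finrank K (P₁ j →ₗ[A] (N ⧸ W)) : ℚ)) = 0 by
    have e : (N ⧸ (⊥ : Submodule A N)) ≃ₗ[A] N := Submodule.quotEquivOfEqBot _ rfl
    have := H ⊥
    calc ∑ j, c j * ((finrank K (P₀ j →ₗ[A] N) : ℚ) - (finrank K (P₁ j →ₗ[A] N) : ℚ))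
        = ∑ j, c j * ((finrank K (P₀ j →ₗ[A] (N ⧸ (⊥ : Submodule A N))) : ℚ)
            - (finrank K (P₁ j →ₗ[A] (N ⧸ (⊥ : Submodule A N))) : ℚ)) := by
          refine Finset.sum_congr rfl fun j _ => ?_
          rw [(homCongr K (P₀ j) e).finrank_eq, (homCongr K (P₁ j) e).finrank_eq]
      _ = 0 := H ⊥
  intro W
  induction W using IsNoetherian.induction with
  | _ W ih =>
  by_cases hsub : Subsingleton (N ⧸ W)
  · haveI := hsub
    have hz : ∀ (P : Type) [AddCommGroup P] [Module A P],
        finrank K (P →ₗ[A] (N ⧸ W)) = 0 := by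
      intro P _ _
      haveI : Subsingleton (P →ₗ[A] (N ⧸ W)) :=
        ⟨fun f g => LinearMap.ext fun x => Subsingleton.elim _ _⟩
      exact Module.finrank_zero_of_subsingleton
    simp [hz]
  · haveI : Nontrivial (N ⧸ W) := not_subsingleton_iff_nontrivial.mp hsub
    haveI : IsArtinian A (N ⧸ W) := inferInstance
    haveI : IsNoetherian A (N ⧸ W) := inferInstance
    -- find a minimal nonzero submodule
    obtain ⟨U, hU, hUmin⟩ := IsArtinian.set_has_minimal
      (R := A) (M := N ⧸ W) {V : Submodule A (N ⧸ W) | V ≠ ⊥}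
      ⟨⊤, bot_ne_top.symm⟩
    have hUatom : IsAtom U := by
      refine ⟨hU, fun V hV => ?_⟩
      by_contra hVne
      exact hUmin V hVne hV
    haveI hUsimple : IsSimpleModule A (↥U) := isSimpleModule_iff_isAtom.mpr hUatom
    haveI : Module.Finite A (N ⧸ W) :=
      Module.Finite.of_surjective W.mkQ (Submodule.mkQ_surjective W)
    haveI : Module.Finite A (↥U) := Module.Finite.iff_fg.mpr (IsNoetherian.noetherian U)
    set T := U.comap W.mkQ with hT
    have hmap : T.map W.mkQ = U :=
      Submodule.map_comap_eq_of_surjective (Submodule.mkQ_surjective W) U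
    have hWle : W ≤ T := by
      intro x hx
      show W.mkQ x ∈ U
      have : W.mkQ x = 0 := (Submodule.Quotient.mk_eq_zero W).mpr hx
      rw [this]
      exact zero_mem U
    have hWT : W < T := by
      refine lt_of_le_of_ne hWle fun hEq => ?_
      apply hU
      have hWmap : W.map W.mkQ = ⊥ := by
        ext z
        simp only [Submodule.mem_map, Submodule.mem_bot]
        constructor
        · rintro ⟨x, hx, rfl⟩
          exact (Submodule.Quotient.mk_eq_zero W).mpr hx
        · rintro rfl
          exact ⟨0, zero_mem W, map_zero _⟩
      rw [← hmap, ← hEq, hWmap]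
    have hadd : ∀ (P : Type) [AddCommGroup P] [Module A P] [Module.Finite A P],
        Module.Projective A P →
        finrank K (P →ₗ[A] (N ⧸ W)) =
          finrank K (P →ₗ[A] (↥U)) + finrank K (P →ₗ[A] ((N ⧸ W) ⧸ U)) := by
      intro P _ _ _ hp
      exact hom_finrank_add hp U.subtype U.mkQ (Submodule.injective_subtype U)
        (Submodule.mkQ_surjective U)
        (by rw [Submodule.ker_mkQ, Submodule.range_subtype])
    have eq2 : ((N ⧸ W) ⧸ U) ≃ₗ[A] (N ⧸ T) :=
      (Submodule.quotEquivOfEq U (T.map W.mkQ) hmap.symm).trans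
        (Submodule.quotientQuotientEquivQuotient W T hWle)
    have h1 := hsimple (↥U) hUsimple
    have h2 := ih T hWT
    calc ∑ j, c j * ((finrank K (P₀ j →ₗ[A] (N ⧸ W)) : ℚ)
            - (finrank K (P₁ j →ₗ[A] (N ⧸ W)) : ℚ))
        = (∑ j, c j * ((finrank K (P₀ j →ₗ[A] (↥U)) : ℚ)
              - (finrank K (P₁ j →ₗ[A] (↥U)) : ℚ)))
          + (∑ j, c j * ((finrank K (P₀ j →ₗ[A] (N ⧸ T)) : ℚ)
              - (finrank K (P₁ j →ₗ[A] (N ⧸ T)) : ℚ))) := by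
          rw [← Finset.sum_add_distrib]
          refine Finset.sum_congr rfl fun j _ => ?_
          rw [hadd (P₀ j) (hp₀ j), hadd (P₁ j) (hp₁ j),
            (homCongr K (P₀ j) eq2).finrank_eq, (homCongr K (P₁ j) eq2).finrank_eq]
          push_cast
          ring
      _ = 0 := by rw [h1, h2, add_zero]

end StratProof

open StratProof Module in
/-- Over a finite dimensional hereditary algebra `A` (such as the path
algebra `KQ` of a finite connected acyclic quiver with `n` vertices, `n` being the number
of isomorphism classes of simple `A`-modules), every stratifying system has size `t ≤ n`. -/
theorem stratifying_system_size_le (K A : Type) [Field K] [Ring A] [Algebra K A]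
    [FiniteDimensional K A] (hA : Hereditary A)
    (n t : ℕ) (S : Fin n → ModuleCat A) (hS : IsCompleteSimpleList A S)
    (X : Fin t → ModuleCat A) (hfin : ∀ i, Module.Finite A (X i))
    (hX : IsStratSys A X) :
    t ≤ n := by
  classical
  by_contra hcon
  push_neg at hcon
  obtain ⟨hindec, hhom, hext⟩ := hX
  -- choose finite free presentations
  have hres : ∀ j : Fin t, ∃ (m : ℕ) (π : (Fin m → A) →ₗ[A] (X j).carrier),
      Function.Surjective π := by
    intro j
    haveI := hfin j
    exact Module.Finite.exists_fin' A (X j).carrier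
  choose μ π hπ using hres
  let P₀ : Fin t → Type := fun j => Fin (μ j) → A
  let P₁ : Fin t → Type := fun j => ↥(LinearMap.ker (π j))
  let ι : ∀ j, P₁ j →ₗ[A] P₀ j := fun j => (LinearMap.ker (π j)).subtype
  haveI hfinP₀ : ∀ j, Module.Finite A (P₀ j) := fun j => inferInstance
  haveI hfinP₁ : ∀ j, Module.Finite A (P₁ j) := by
    intro j
    haveI : IsNoetherian A (P₀ j) := (noeth_and_art (K := K) (A := A) (P₀ j)).1
    exact Module.Finite.iff_fg.mpr (IsNoetherian.noetherian (LinearMap.ker (π j)))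
  have hp₀ : ∀ j, Module.Projective A (P₀ j) := fun j =>
    Module.Projective.of_basis (Pi.basisFun A (Fin (μ j)))
  have hp₁ : ∀ j, Module.Projective A (P₁ j) := by
    intro j
    have hfree : CategoryTheory.Projective (ModuleCat.of A (P₀ j)) :=
      (IsProjective.iff_projective (P₀ j)).mp (hp₀ j)
    have hker := hA (ModuleCat.of A (P₀ j)) hfree (LinearMap.ker (π j))
    exact (IsProjective.iff_projective (P₁ j)).mpr hker
  -- the vectors of Euler characteristics against the simple modules
  let Φ : Fin t → (Fin n → ℚ) := fun j i =>
    (finrank K (P₀ j →ₗ[A] (S i).carrier) : ℚ) - (finrank K (P₁ j →ₗ[A] (S i).carrier) : ℚ)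
  have hΦdep : ¬ LinearIndependent ℚ Φ := by
    intro hli
    have hle := hli.fintype_card_le_finrank
    rw [Module.finrank_fin_fun, Fintype.card_fin] at hle
    omega
  obtain ⟨c, hc0, j₀, hj₀⟩ := Fintype.not_linearIndependent_iff.mp hΦdep
  -- the minimal index with nonzero coefficient
  let sset : Finset (Fin t) := Finset.univ.filter (fun j => c j ≠ 0)
  have hne : sset.Nonempty := ⟨j₀, by simp [sset, hj₀]⟩
  let m : Fin t := sset.min' hne
  have hcm : c m ≠ 0 := by
    have := sset.min'_mem hne
    simpa [sset] using this
  haveI := hfin m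
  -- the alternating sum of hom-space dimensions vanishes on every f.d. module
  have hmain : ∑ j, c j * ((finrank K (P₀ j →ₗ[A] (X m).carrier) : ℚ)
      - (finrank K (P₁ j →ₗ[A] (X m).carrier) : ℚ)) = 0 := by
    refine sum_vanish c P₀ P₁ hp₀ hp₁ ?_ (X m).carrier
    intro V _ _ hV
    haveI := hV
    haveI : Nontrivial V := IsSimpleModule.nontrivial A V
    obtain ⟨x, hx⟩ := exists_ne (0 : V)
    have hspan : Submodule.span A {x} = ⊤ :=
      (eq_bot_or_eq_top (Submodule.span A ({x} : Set V))).resolve_left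
        (by simpa [Submodule.span_singleton_eq_bot] using hx)
    set f := LinearMap.toSpanSingleton A V x with hf
    have hfs : Function.Surjective f := by
      rw [← LinearMap.range_eq_top, ← LinearMap.span_singleton_eq_range, hspan]
    have e0 : (A ⧸ LinearMap.ker f) ≃ₗ[A] V := f.quotKerEquivOfSurjective hfs
    have eU : ULift (A ⧸ LinearMap.ker f) ≃ₗ[A] V := ULift.moduleEquiv.trans e0
    haveI : IsSimpleModule A (ULift (A ⧸ LinearMap.ker f)) := IsSimpleModule.congr eU
    obtain ⟨i, ⟨iso⟩⟩ := hS.2.2 (ModuleCat.of A (ULift (A ⧸ LinearMap.ker f))) ‹_›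
    have eVS : V ≃ₗ[A] (S i).carrier := eU.symm.trans iso.toLinearEquiv
    have hci : ∑ j, c j * Φ j i = 0 := by
      have := congrFun hc0 i
      simpa [Finset.sum_apply, smul_eq_mul] using this
    calc ∑ j, c j * ((finrank K (P₀ j →ₗ[A] V) : ℚ) - (finrank K (P₁ j →ₗ[A] V) : ℚ))
        = ∑ j, c j * Φ j i := by
          refine Finset.sum_congr rfl fun j _ => ?_
          rw [(homCongr K (P₀ j) eVS).finrank_eq, (homCongr K (P₁ j) eVS).finrank_eq]
      _ = 0 := hci
  -- computation of the Euler characteristics against `X m`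
  have hval : ∀ j, m ≤ j → finrank K (P₀ j →ₗ[A] (X m).carrier)
      = finrank K ((X j).carrier →ₗ[A] (X m).carrier) + finrank K (P₁ j →ₗ[A] (X m).carrier) := by
    intro j hmj
    haveI := hfin j
    exact hom_finrank_resolution (X j) (X m) (ι j) (π j)
      (Submodule.injective_subtype _) (hπ j) (by rw [Submodule.range_subtype])
      (hext m j hmj)
  have hhomzero : ∀ j, m < j → finrank K ((X j).carrier →ₗ[A] (X m).carrier) = 0 := by
    intro j hj
    haveI : Subsingleton ((X j).carrier →ₗ[A] (X m).carrier) := by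
      constructor
      intro f g
      exact (congrArg ModuleCat.Hom.hom (hhom m j hj (ModuleCat.ofHom f))).trans
        (congrArg ModuleCat.Hom.hom (hhom m j hj (ModuleCat.ofHom g))).symm
    exact Module.finrank_zero_of_subsingleton
  have hend : finrank K ((X m).carrier →ₗ[A] (X m).carrier) ≠ 0 := by
    haveI := findim_hom (K := K) (A := A) (X m).carrier (X m).carrier
    haveI : Nontrivial (X m).carrier := by
      rw [← not_subsingleton_iff_nontrivial]
      intro hsub
      haveI := hsub
      exact (hindec m).1 (ModuleCat.isZero_of_subsingleton (X m))
    haveI : Nontrivial ((X m).carrier →ₗ[A] (X m).carrier) := by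
      obtain ⟨x, hx⟩ := exists_ne (0 : (X m).carrier)
      refine ⟨LinearMap.id, 0, fun hid => hx ?_⟩
      have := congrFun (congrArg
        (fun (u : (X m).carrier →ₗ[A] (X m).carrier) => (u : (X m).carrier → (X m).carrier)) hid) x
      simpa using this
    exact Module.finrank_pos.ne'
  -- conclude
  rw [Finset.sum_eq_single m (fun j _ hjm => ?_) (by simp)] at hmain
  · rw [hval m le_rfl] at hmain
    have : (c m) * (finrank K ((X m).carrier →ₗ[A] (X m).carrier) : ℚ) = 0 := by
      push_cast at hmain
      linarith [hmain]
    rcases mul_eq_zero.mp this with h | h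
    · exact hcm h
    · exact hend (by exact_mod_cast h)
  · by_cases hcz : c j = 0
    · rw [hcz, zero_mul]
    · have hjs : j ∈ sset := by simp [sset, hcz]
      have hmj : m ≤ j := sset.min'_le j hjs
      have hlt : m < j := lt_of_le_of_ne hmj (Ne.symm hjm)
      rw [hval j hmj, hhomzero j hlt]
      push_cast
      ring
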